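/- Let (u,p) ∈ K × Q solve the continuous Biot contact problem and let (u_N, p_M) ∈ K_N × W solve the discrete Biot contact problem. Then ⟨p − p_M, q⟩_Q = −⟨B(u − u_N), q⟩_Q for all q ∈ W, and consequently ‖p − p_M‖_Q² ≤ 3‖u − u_N‖_H² + 3‖p − q_M‖_Q² for every q_M ∈ W. -/
import Mathlib


open scoped RealInnerProductSpace

/-- Galerkin orthogonality for the pressure,
`⟨p − p_M, q⟩ = −⟨B(u − u_N), q⟩` for all `q ∈ W`, and the consequent estimate
`‖p − p_M‖² ≤ 3‖u − u_N‖² + 3‖p − q_M‖²` for every `q_M ∈ W`. -/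
theorem stmt_16 {H Q : Type*}
    [NormedAddCommGroup H] [InnerProductSpace ℝ H] [CompleteSpace H]
    [NormedAddCommGroup Q] [InnerProductSpace ℝ Q] [CompleteSpace Q]
    (B : H →L[ℝ] Q) (hB : ‖B‖ ≤ 1)
    (K : Set H) (hK_ne : K.Nonempty) (hK_cl : IsClosed K) (hK_cv : Convex ℝ K)
    (V_N : Submodule ℝ H) (hVN : FiniteDimensional ℝ V_N)
    (K_N : Set H) (hKN_sub : K_N ⊆ (V_N : Set H))
    (hKN_ne : K_N.Nonempty) (hKN_cl : IsClosed K_N) (hKN_cv : Convex ℝ K_N)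
    (W : Submodule ℝ Q) (hW : FiniteDimensional ℝ W)
    (f_e : H) (f_f : Q)
    (u : H) (p : Q) (hu : u ∈ K)
    (hVI : ∀ v ∈ K, ⟪u, v - u⟫ - ⟪p, B (v - u)⟫ ≥ ⟪f_e, v - u⟫)
    (hEq : ∀ q : Q, -⟪B u, q⟫ - ⟪p, q⟫ = ⟪f_f, q⟫)
    (u_N : H) (p_M : Q) (huN : u_N ∈ K_N) (hpM : p_M ∈ W)
    (hVIN : ∀ v_N ∈ K_N, ⟪u_N, v_N - u_N⟫ - ⟪p_M, B (v_N - u_N)⟫ ≥ ⟪f_e, v_N - u_N⟫)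
    (hEqN : ∀ q ∈ W, -⟪B u_N, q⟫ - ⟪p_M, q⟫ = ⟪f_f, q⟫) :
    (∀ q ∈ W, ⟪p - p_M, q⟫ = -⟪B (u - u_N), q⟫) ∧
    (∀ q_M ∈ W, ‖p - p_M‖ ^ 2 ≤ 3 * ‖u - u_N‖ ^ 2 + 3 * ‖p - q_M‖ ^ 2) := by

  have horth : ∀ q ∈ W, ⟪p - p_M, q⟫ = -⟪B (u - u_N), q⟫ := by
    intro q hq
    have h1 := hEq q
    have h2 := hEqN q hq
    rw [inner_sub_left, map_sub, inner_sub_left]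
    linarith
  refine ⟨horth, ?_⟩
  intro q_M hqM
  have key := horth (q_M - p_M) (W.sub_mem hqM hpM)
  have hsplit : ‖p - p_M‖ ^ 2 = ⟪p - p_M, p - q_M⟫ + ⟪p - p_M, q_M - p_M⟫ := by
    rw [← inner_add_right, ← real_inner_self_eq_norm_sq, show p - q_M + (q_M - p_M) = p - p_M by abel]
  have h1 : ⟪p - p_M, p - q_M⟫ ≤ ‖p - p_M‖ * ‖p - q_M‖ := real_inner_le_norm _ _
  have h2 : -⟪B (u - u_N), q_M - p_M⟫ ≤ ‖u - u_N‖ * ‖q_M - p_M‖ := by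
    calc -⟪B (u - u_N), q_M - p_M⟫ ≤ ‖B (u - u_N)‖ * ‖q_M - p_M‖ := by
          have := real_inner_le_norm (-(B (u - u_N))) (q_M - p_M)
          simp only [inner_neg_left, norm_neg] at this
          linarith
      _ ≤ ‖u - u_N‖ * ‖q_M - p_M‖ := by
          have h := B.le_opNorm (u - u_N)
          have : ‖B (u - u_N)‖ ≤ ‖u - u_N‖ :=
            h.trans (by nlinarith [norm_nonneg (u - u_N)])
          exact mul_le_mul_of_nonneg_right this (norm_nonneg _)
  have h3 : ‖q_M - p_M‖ ≤ ‖p - q_M‖ + ‖p - p_M‖ := by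
    have := norm_sub_le_norm_sub_add_norm_sub q_M p p_M
    simpa [norm_sub_rev] using this
  have h4 : ‖u - u_N‖ * ‖q_M - p_M‖ ≤ ‖u - u_N‖ * (‖p - q_M‖ + ‖p - p_M‖) :=
    mul_le_mul_of_nonneg_left h3 (norm_nonneg _)
  nlinarith [sq_nonneg (‖p - p_M‖ - 2 * ‖p - q_M‖), sq_nonneg (‖p - p_M‖ - 2 * ‖u - u_N‖),
    sq_nonneg (‖u - u_N‖ - ‖p - q_M‖)]
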